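/- Assume: (i) the drive system (1) is sensitive with constants ε₀, Δ > 0 (for every δ₀ > 0 and chaotic solution x(t) there exist a chaotic solution x̄(t) and an interval J ⊆ [0,∞) of length ≥ Δ with ‖x(0) − x̄(0)‖ < δ₀ and ‖x(t) − x̄(t)‖ > ε₀ on J); (ii) all chaotic solutions of (1) take values in a compact set Λ with ‖x(t)‖ ≤ H₀ and form an equicontinuous family on [0,∞); (iii) g : ℝ³ → ℝ³ is continuous and satisfies ‖g(x) − g(x̄)‖ ≥ L_g ‖x − x̄‖ on Λ for some L_g > 0; (iv) all solutions of the response system (5) driven by chaotic solutions of (1) remain in a compact invariant set 𝒰 with norm bound K₀, and the Lorenz vector field f(v) = (−σ̄v₁+σ̄v₂, −v₁v₃+r̄v₁−v₂, v₁v₂−b̄v₃) is L_f-Lipschitz on 𝒰. Then the response system (5) is sensitive: there exist ε₁ > 0 and Δ̄ > 0 such that for every δ₁ > 0, every y₀ ∈ 𝒰, and every chaotic solution x(t) of (1), there exist y₁ ∈ 𝒰 with ‖y₀ − y₁‖ < δ₁, a chaotic solution x̄(t) of (1), and an interval J¹ ⊆ [0,∞) of length ≥ Δ̄ such that ‖φ_{x(t)}(t,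 y₀) − φ_{x̄(t)}(t, y₁)‖ > ε₁ for all t ∈ J¹. Explicitly, one may take ε₁ = τ L_g ε₀ / (12(2 + τ L_f)) where τ < Δ is an equicontinuity modulus for the family {g_j∘x₁ − g_j∘x₂} at tolerance L_g ε₀/6. -/

import Mathlib

lemma coord_le_norm (v : EuclideanSpace ℝ (Fin 3)) (j : Fin 3) : |v j| ≤ ‖v‖ := by
  rw [EuclideanSpace.norm_eq]
  rw [show |v j| = Real.sqrt (‖v j‖ ^ 2) by rw [Real.sqrt_sq_eq_abs]; simp]
  apply Real.sqrt_le_sqrt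
  exact Finset.single_le_sum (f := fun i => ‖v i‖ ^ 2) (fun i _ => by positivity) (Finset.mem_univ j)

lemma exists_coord_ge (v : EuclideanSpace ℝ (Fin 3)) : ∃ j : Fin 3, ‖v‖ / 2 ≤ |v j| := by
  by_contra h
  push_neg at h
  rcases eq_or_lt_of_le (norm_nonneg v) with h0 | h0
  · exact absurd (h 0) (by simp [← h0])
  · have hsum : ∑ i : Fin 3, ‖v i‖ ^ 2 < 3 * (‖v‖ / 2) ^ 2 := by
      have : ∀ i : Fin 3, ‖v i‖ ^ 2 < (‖v‖ / 2) ^ 2 := fun i => by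
        have := h i
        have h2 : (0:ℝ) ≤ |v i| := abs_nonneg _
        rw [Real.norm_eq_abs]; nlinarith
      calc ∑ i : Fin 3, ‖v i‖ ^ 2 < ∑ _i : Fin 3, (‖v‖ / 2) ^ 2 := by
            apply Finset.sum_lt_sum_of_nonempty
            · simp
            · exact fun i _ => this i
        _ = 3 * (‖v‖ / 2) ^ 2 := by
            rw [Finset.sum_const]
            simp
    have hn : ‖v‖ ^ 2 = ∑ i : Fin 3, ‖v i‖ ^ 2 := by
      rw [EuclideanSpace.norm_eq, Real.sq_sqrt]
      positivity
    nlinarith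

set_option maxHeartbeats 2000000 in
/-- Theorem 1 of the paper: persistence of sensitivity in the response
Lorenz system. `X` is the set of chaotic solutions of the drive system (1),
`φ x y₀` is the solution of the response system (5) driven by `x` with
initial value `y₀`, and `f` is the Lorenz vector field of the response. -/
theorem stmt_18
    (σ r b : ℝ)
    (f : EuclideanSpace ℝ (Fin 3) → EuclideanSpace ℝ (Fin 3))
    (hf : ∀ v : EuclideanSpace ℝ (Fin 3),
      f v 0 = -σ * v 0 + σ * v 1 ∧
      f v 1 = -(v 0) * v 2 + r * v 0 - v 1 ∧
      f v 2 = v 0 * v 1 - b * v 2)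
    (g : EuclideanSpace ℝ (Fin 3) → EuclideanSpace ℝ (Fin 3))
    (X : Set (ℝ → EuclideanSpace ℝ (Fin 3)))
    (Λ U : Set (EuclideanSpace ℝ (Fin 3)))
    (φ : (ℝ → EuclideanSpace ℝ (Fin 3)) → EuclideanSpace ℝ (Fin 3) →
      ℝ → EuclideanSpace ℝ (Fin 3))
    (ε₀ Δ H₀ Lg K₀ Lf : ℝ)
    (hε₀ : 0 < ε₀) (hΔ : 0 < Δ) (hH₀ : 0 < H₀) (hLg : 0 < Lg)
    (hK₀ : 0 < K₀) (hLf : 0 < Lf)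
    -- (i) sensitivity of the drive system
    (hsens : ∀ δ₀ > 0, ∀ x ∈ X, ∃ xbar ∈ X, ‖x 0 - xbar 0‖ < δ₀ ∧
      ∃ a : ℝ, 0 ≤ a ∧ ∀ t ∈ Set.Icc a (a + Δ), ε₀ < ‖x t - xbar t‖)
    -- (ii) chaotic solutions lie in the compact set Λ, are bounded by H₀,
    -- and form an equicontinuous family on [0, ∞)
    (hΛcomp : IsCompact Λ)
    (hxΛ : ∀ x ∈ X, ∀ t : ℝ, 0 ≤ t → x t ∈ Λ)
    (hxbnd : ∀ x ∈ X, ∀ t : ℝ, 0 ≤ t → ‖x t‖ ≤ H₀)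
    (hequi : ∀ ε > 0, ∃ δ > 0, ∀ x ∈ X, ∀ t₁ t₂ : ℝ, 0 ≤ t₁ → 0 ≤ t₂ →
      |t₁ - t₂| < δ → ‖x t₁ - x t₂‖ < ε)
    -- (iii) g is continuous and expansive on Λ
    (hgcont : Continuous g)
    (hgexp : ∀ x ∈ Λ, ∀ x' ∈ Λ, Lg * ‖x - x'‖ ≤ ‖g x - g x'‖)
    -- (iv) solutions of the response system remain in the compact set U,
    -- bounded by K₀, and f is Lf-Lipschitz on U
    (hUcomp : IsCompact U)
    (hφ0 : ∀ x ∈ X, ∀ y₀ ∈ U, φ x y₀ 0 = y₀)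
    (hφode : ∀ x ∈ X, ∀ y₀ ∈ U, ∀ t : ℝ, 0 ≤ t →
      HasDerivAt (φ x y₀) (f (φ x y₀ t) + g (x t)) t)
    (hφU : ∀ x ∈ X, ∀ y₀ ∈ U, ∀ t : ℝ, 0 ≤ t → φ x y₀ t ∈ U)
    (hφbnd : ∀ x ∈ X, ∀ y₀ ∈ U, ∀ t : ℝ, 0 ≤ t → ‖φ x y₀ t‖ ≤ K₀)
    (hfLip : ∀ u ∈ U, ∀ v ∈ U, ‖f u - f v‖ ≤ Lf * ‖u - v‖) :
    -- conclusion: the response system is sensitive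
    ∃ ε₁ > 0, ∃ Δbar > 0, ∀ δ₁ > 0, ∀ y₀ ∈ U, ∀ x ∈ X,
      ∃ y₁ ∈ U, ‖y₀ - y₁‖ < δ₁ ∧ ∃ xbar ∈ X, ∃ a : ℝ, 0 ≤ a ∧
        ∀ t ∈ Set.Icc a (a + Δbar), ε₁ < ‖φ x y₀ t - φ xbar y₁ t‖ := by
  classical
  -- bound for g on Λ
  obtain ⟨C, hC⟩ := hΛcomp.exists_bound_of_continuousOn hgcont.continuousOn
  set Mg : ℝ := max C 0 with hMgdef
  have hMg : ∀ v ∈ Λ, ‖g v‖ ≤ Mg := fun v hv => (hC v hv).trans (le_max_left _ _)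
  have hMg0 : (0:ℝ) ≤ Mg := le_max_right _ _
  -- uniform continuity of g on Λ
  obtain ⟨η, hη, hgη⟩ := Metric.uniformContinuousOn_iff.mp
    (hΛcomp.uniformContinuousOn_of_continuous hgcont.continuousOn) (Lg * ε₀ / 12) (by positivity)
  obtain ⟨δ, hδ, hxδ⟩ := hequi η hη
  set τ : ℝ := min (δ / 2) Δ with hτdef
  have hτ : 0 < τ := lt_min (by linarith) hΔ
  have hτΔ : τ ≤ Δ := min_le_right _ _
  have hτδ : τ < δ := (min_le_left _ _).trans_lt (by linarith)
  set M : ℝ := 2 * Lf * K₀ + 2 * Mg + 1 with hMdef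
  have hM0 : 0 < M := by nlinarith [mul_pos hLf hK₀]
  have h2τ : (0:ℝ) < 2 + τ * Lf := by positivity
  set ε₁ : ℝ := τ * Lg * ε₀ / (12 * (2 + τ * Lf)) with hε₁def
  have hε₁ : 0 < ε₁ := by positivity
  refine ⟨ε₁, hε₁, ε₁ / M, div_pos hε₁ hM0, ?_⟩
  intro δ₁ hδ₁ y₀ hy₀ x hx
  obtain ⟨xbar, hxbar, -, a, ha, hJ⟩ := hsens 1 one_pos x hx
  refine ⟨y₀, hy₀, by simpa using hδ₁, xbar, hxbar, ?_⟩
  set u : ℝ → EuclideanSpace ℝ (Fin 3) := φ x y₀ with hu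
  set v : ℝ → EuclideanSpace ℝ (Fin 3) := φ xbar y₀ with hv
  set w : ℝ → EuclideanSpace ℝ (Fin 3) := fun t => u t - v t with hw
  set W : ℝ → EuclideanSpace ℝ (Fin 3) :=
    fun t => (f (u t) + g (x t)) - (f (v t) + g (xbar t)) with hW
  have hwder : ∀ t : ℝ, 0 ≤ t → HasDerivAt w (W t) t := fun t ht =>
    (hφode x hx y₀ hy₀ t ht).sub (hφode xbar hxbar y₀ hy₀ t ht)
  set d : ℝ → EuclideanSpace ℝ (Fin 3) := fun t => g (x t) - g (xbar t) with hd
  have hWeq : ∀ t : ℝ, W t = (f (u t) - f (v t)) + d t := fun t => by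
    simp only [hW, hd]; abel
  -- Lipschitz bound on f-difference
  have hfd : ∀ t : ℝ, 0 ≤ t → ‖f (u t) - f (v t)‖ ≤ Lf * ‖w t‖ := fun t ht =>
    hfLip (u t) (hφU x hx y₀ hy₀ t ht) (v t) (hφU xbar hxbar y₀ hy₀ t ht)
  -- uniform bound on the derivative
  have hWbnd : ∀ t : ℝ, 0 ≤ t → ‖W t‖ ≤ M := by
    intro t ht
    have h1 : ‖f (u t) - f (v t)‖ ≤ Lf * (2 * K₀) := by
      refine (hfd t ht).trans ?_
      have h2 : ‖w t‖ ≤ 2 * K₀ := by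
        calc ‖w t‖ ≤ ‖u t‖ + ‖v t‖ := norm_sub_le _ _
          _ ≤ K₀ + K₀ := add_le_add (hφbnd x hx y₀ hy₀ t ht) (hφbnd xbar hxbar y₀ hy₀ t ht)
          _ = 2 * K₀ := by ring
      nlinarith
    have h3 : ‖d t‖ ≤ 2 * Mg := by
      calc ‖d t‖ ≤ ‖g (x t)‖ + ‖g (xbar t)‖ := norm_sub_le _ _
        _ ≤ Mg + Mg := add_le_add (hMg _ (hxΛ x hx t ht)) (hMg _ (hxΛ xbar hxbar t ht))
        _ = 2 * Mg := by ring
    calc ‖W t‖ = ‖(f (u t) - f (v t)) + d t‖ := by rw [hWeq]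
      _ ≤ ‖f (u t) - f (v t)‖ + ‖d t‖ := norm_add_le _ _
      _ ≤ Lf * (2 * K₀) + 2 * Mg := add_le_add h1 h3
      _ ≤ M := by rw [hMdef]; nlinarith
  -- lower bound at time a
  have haΔ : a ∈ Set.Icc a (a + Δ) := ⟨le_refl a, by linarith⟩
  have hda : Lg * ε₀ < ‖d a‖ := by
    have h1 := hJ a haΔ
    have h2 := hgexp (x a) (hxΛ x hx a ha) (xbar a) (hxΛ xbar hxbar a ha)
    calc Lg * ε₀ < Lg * ‖x a - xbar a‖ := by nlinarith
      _ ≤ ‖g (x a) - g (xbar a)‖ := h2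
      _ = ‖d a‖ := rfl
  obtain ⟨j, hj⟩ := exists_coord_ge (d a)
  have hja : Lg * ε₀ / 2 < |d a j| := by
    have := hj
    linarith
  -- variation of d j on [a, a+τ]
  have hvar : ∀ t ∈ Set.Icc a (a + τ), |d t j - d a j| ≤ Lg * ε₀ / 6 := by
    intro t ht
    have ht0 : 0 ≤ t := le_trans ha ht.1
    have htδ : |t - a| < δ := by
      rw [abs_of_nonneg (by linarith [ht.1])]
      have := ht.2
      linarith
    have hx1 : ‖x t - x a‖ < η := hxδ x hx t a ht0 ha htδ
    have hx2 : ‖xbar t - xbar a‖ < η := hxδ xbar hxbar t a ht0 ha htδ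
    have hg1 : ‖g (x t) - g (x a)‖ < Lg * ε₀ / 12 := by
      have := hgη (x t) (hxΛ x hx t ht0) (x a) (hxΛ x hx a ha)
        (by rwa [dist_eq_norm])
      rwa [dist_eq_norm] at this
    have hg2 : ‖g (xbar t) - g (xbar a)‖ < Lg * ε₀ / 12 := by
      have := hgη (xbar t) (hxΛ xbar hxbar t ht0) (xbar a) (hxΛ xbar hxbar a ha)
        (by rwa [dist_eq_norm])
      rwa [dist_eq_norm] at this
    have hcoord : |d t j - d a j| ≤ ‖d t - d a‖ := by
      have := coord_le_norm (d t - d a) j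
      simpa using this
    have hdd : ‖d t - d a‖ ≤ ‖g (x t) - g (x a)‖ + ‖g (xbar t) - g (xbar a)‖ := by
      have : d t - d a = (g (x t) - g (x a)) - (g (xbar t) - g (xbar a)) := by
        simp only [hd]; abel
      rw [this]
      exact norm_sub_le _ _
    linarith
  -- sign
  set σs : ℝ := if 0 ≤ d a j then (1:ℝ) else -1 with hσdef
  have hσabs : |σs| = 1 := by
    rw [hσdef]; split_ifs <;> simp
  have hσa : σs * d a j = |d a j| := by
    rw [hσdef]; split_ifs with hcase
    · rw [abs_of_nonneg hcase]; ring
    · rw [abs_of_neg (lt_of_not_ge hcase)]; ring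
  have hsign : ∀ t ∈ Set.Icc a (a + τ), Lg * ε₀ / 3 ≤ σs * d t j := by
    intro t ht
    have h1 := hvar t ht
    have h2 : -|d t j - d a j| ≤ σs * (d t j - d a j) := by
      have := neg_abs_le (σs * (d t j - d a j))
      rwa [abs_mul, hσabs, one_mul] at this
    have h3 : σs * d t j = σs * d a j + σs * (d t j - d a j) := by ring
    rw [h3, hσa]
    linarith
  -- maximum of ‖w‖ on [a, a+τ]
  have hwcont : ContinuousOn (fun t => ‖w t‖) (Set.Icc a (a + τ)) := by
    intro t ht
    have ht0 : 0 ≤ t := le_trans ha ht.1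
    exact ((hwder t ht0).continuousAt.continuousWithinAt).norm
  obtain ⟨s, hsmem, hsmax⟩ := isCompact_Icc.exists_isMaxOn
    ⟨a, ⟨le_refl a, by linarith⟩⟩ hwcont
  set S : ℝ := ‖w s‖ with hSdef
  have hS : ∀ t ∈ Set.Icc a (a + τ), ‖w t‖ ≤ S := fun t ht => hsmax ht
  have hS0 : 0 ≤ S := norm_nonneg _
  -- monotone auxiliary function
  set m : ℝ := Lg * ε₀ / 3 - Lf * S with hm
  set wj : ℝ → ℝ := fun t => σs * (w t j) - m * t with hwj
  have hwjder : ∀ t : ℝ, 0 ≤ t → HasDerivAt wj (σs * (W t j) - m) t := by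
    intro t ht
    have h1 : HasDerivAt (fun t => w t j) (W t j) t := by
      have := (EuclideanSpace.proj (𝕜 := ℝ) j).hasFDerivAt.comp_hasDerivAt t (hwder t ht)
      simp at this; exact this
    have h2 := (h1.const_mul σs).sub ((hasDerivAt_id t).const_mul m)
    simp at h2; exact h2
  have hmono : MonotoneOn wj (Set.Icc a (a + τ)) := by
    apply monotoneOn_of_deriv_nonneg (convex_Icc _ _)
    · intro t ht
      have ht0 : 0 ≤ t := le_trans ha ht.1
      exact (hwjder t ht0).continuousAt.continuousWithinAt
    · intro t ht
      rw [interior_Icc] at ht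
      have ht0 : 0 ≤ t := le_trans ha (le_of_lt ht.1)
      exact ((hwjder t ht0).differentiableAt).differentiableWithinAt
    · intro t ht
      rw [interior_Icc] at ht
      have ht0 : 0 ≤ t := le_trans ha (le_of_lt ht.1)
      have htmem : t ∈ Set.Icc a (a + τ) := ⟨le_of_lt ht.1, le_of_lt ht.2⟩
      rw [(hwjder t ht0).deriv]
      have hWj : W t j = (f (u t) - f (v t)) j + d t j := by
        rw [hWeq]; simp
      have h1 : -|(f (u t) - f (v t)) j| ≤ σs * ((f (u t) - f (v t)) j) := by
        have := neg_abs_le (σs * ((f (u t) - f (v t)) j))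
        rwa [abs_mul, hσabs, one_mul] at this
      have h2 : |(f (u t) - f (v t)) j| ≤ Lf * S := by
        calc |(f (u t) - f (v t)) j| ≤ ‖f (u t) - f (v t)‖ := coord_le_norm _ j
          _ ≤ Lf * ‖w t‖ := hfd t ht0
          _ ≤ Lf * S := by nlinarith [hS t htmem]
      have h3 := hsign t htmem
      have h4 : σs * (W t j) = σs * ((f (u t) - f (v t)) j) + σs * (d t j) := by
        rw [hWj]; ring
      rw [h4]
      rw [hm]
      linarith
  -- extract lower bound on S
  have hkey : m * τ ≤ 2 * S := by
    have h1 : wj a ≤ wj (a + τ) := hmono ⟨le_refl a, by linarith⟩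
      ⟨by linarith, le_refl _⟩ (by linarith)
    have h2 : σs * (w (a + τ) j) - σs * (w a j) ≤ 2 * S := by
      have ha1 : |w a j| ≤ S := (coord_le_norm (w a) j).trans
        (hS a ⟨le_refl a, by linarith⟩)
      have ha2 : |w (a + τ) j| ≤ S := (coord_le_norm (w (a + τ)) j).trans
        (hS (a + τ) ⟨by linarith, le_refl _⟩)
      have hb1 : σs * (w (a + τ) j) ≤ |w (a + τ) j| := by
        have := le_abs_self (σs * (w (a + τ) j))
        rwa [abs_mul, hσabs, one_mul] at this
      have hb2 : -|w a j| ≤ σs * (w a j) := by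
        have := neg_abs_le (σs * (w a j))
        rwa [abs_mul, hσabs, one_mul] at this
      linarith
    have h3 : σs * (w a j) - m * a ≤ σs * (w (a + τ) j) - m * (a + τ) := h1
    nlinarith
  have h4ε : 4 * ε₁ ≤ S := by
    have hkey2 : τ * Lg * ε₀ ≤ 6 * S + 3 * τ * Lf * S := by
      rw [hm] at hkey
      nlinarith
    have hmul : ε₁ * (12 * (2 + τ * Lf)) = τ * Lg * ε₀ := by
      rw [hε₁def]; field_simp
    nlinarith
  -- conclusion on the interval [s, s + ε₁/M]
  have hs0 : 0 ≤ s := le_trans ha hsmem.1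
  refine ⟨s, hs0, ?_⟩
  intro t ht
  have hts : s ≤ t := ht.1
  have ht0 : 0 ≤ t := le_trans hs0 hts
  have hmvt : ‖w t - w s‖ ≤ M * ‖t - s‖ := by
    apply Convex.norm_image_sub_le_of_norm_hasDerivWithin_le
      (f' := W) (s := Set.Icc s t)
      (fun r hr => (hwder r (le_trans hs0 hr.1)).hasDerivWithinAt)
      (fun r hr => hWbnd r (le_trans hs0 hr.1)) (convex_Icc _ _)
      ⟨le_refl s, hts⟩ ⟨hts, le_refl t⟩
  have hnorm : ‖t - s‖ = t - s := by
    rw [Real.norm_eq_abs, abs_of_nonneg (by linarith)]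
  have hMts : M * (t - s) ≤ ε₁ := by
    have h1 : t - s ≤ ε₁ / M := by linarith [ht.2]
    calc M * (t - s) ≤ M * (ε₁ / M) := by nlinarith
      _ = ε₁ := by field_simp
  have hlow : S - ‖w t - w s‖ ≤ ‖w t‖ := by
    have h1 : ‖w s‖ - ‖w t‖ ≤ ‖w s - w t‖ := norm_sub_norm_le (w s) (w t)
    have h2 : ‖w s - w t‖ = ‖w t - w s‖ := norm_sub_rev _ _
    rw [← hSdef] at h1
    linarith
  have : ε₁ < ‖w t‖ := by
    rw [hnorm] at hmvt
    nlinarith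
  exact this
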